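/- arXiv:1303.5518 — 3 statements merged into one kernel-verified Lean document; each statement's English description precedes it below -/
import Mathlib

section
/- The function g(λ) = Γ(λ + 1/2)/Γ(λ) is strictly increasing on (0, ∞), where Γ is the Gamma function. -/
open Real

private lemma gammaF_pos {x : ℝ} (hx : 0 < x) :
    0 < Real.Gamma (x + 1 / 2) / Real.Gamma x :=
  div_pos (Real.Gamma_pos_of_pos (by linarith)) (Real.Gamma_pos_of_pos hx)

/-- The functional equation `f x * f (x + 1/2) = x`. -/
private lemma gammaF_funEq {x : ℝ} (hx : 0 < x) :
    (Real.Gamma (x + 1 / 2) / Real.Gamma x) *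
      (Real.Gamma (x + 1 / 2 + 1 / 2) / Real.Gamma (x + 1 / 2)) = x := by
  have h1 : x + 1 / 2 + 1 / 2 = x + 1 := by ring
  rw [h1, Real.Gamma_add_one (ne_of_gt hx)]
  have h2 := (Real.Gamma_pos_of_pos hx).ne'
  have h3 := (Real.Gamma_pos_of_pos (show (0:ℝ) < x + 1 / 2 by linarith)).ne'
  field_simp

/-- Monotonicity (non-strict), from convexity of `log ∘ Gamma`. -/
private lemma gammaF_mono :
    MonotoneOn (fun lam : ℝ => Real.Gamma (lam + 1 / 2) / Real.Gamma lam)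
      (Set.Ioi (0 : ℝ)) := by
  intro x hx y hy hxy
  rcases eq_or_lt_of_le hxy with rfl | hlt
  · exact le_rfl
  have hx0 : (0:ℝ) < x := hx
  have hy0 : (0:ℝ) < y := hy
  have hg := Real.convexOn_log_Gamma
  set g : ℝ → ℝ := Real.log ∘ Real.Gamma with hgdef
  have hden : 0 < y + 1 / 2 - x := by linarith
  set t : ℝ := (1 / 2) / (y + 1 / 2 - x) with htdef
  have ht : t * (y + 1 / 2 - x) = 1 / 2 := div_mul_cancel₀ _ hden.ne'
  have ht0 : 0 < t := by positivity
  have ht1 : t ≤ 1 := by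
    rw [htdef, div_le_one hden]; linarith
  have hmemx : x ∈ Set.Ioi (0:ℝ) := hx
  have hmemy : y + 1 / 2 ∈ Set.Ioi (0:ℝ) := by simp; linarith
  have e1 : (1 - t) • x + t • (y + 1 / 2) = x + 1 / 2 := by
    simp only [smul_eq_mul]
    linear_combination ht
  have e2 : t • x + (1 - t) • (y + 1 / 2) = y := by
    simp only [smul_eq_mul]
    linear_combination -ht
  have c1 := hg.2 hmemx hmemy (by linarith : (0:ℝ) ≤ 1 - t) ht0.le (by ring)
  have c2 := hg.2 hmemx hmemy ht0.le (by linarith : (0:ℝ) ≤ 1 - t) (by ring)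
  rw [e1] at c1
  rw [e2] at c2
  simp only [smul_eq_mul] at c1 c2
  have key : g (x + 1 / 2) + g y ≤ g x + g (y + 1 / 2) := by nlinarith [c1, c2]
  -- convert to the ratio statement via exp
  have hgx : Real.exp (g x) = Real.Gamma x := Real.exp_log (Real.Gamma_pos_of_pos hx0)
  have hgy : Real.exp (g y) = Real.Gamma y := Real.exp_log (Real.Gamma_pos_of_pos hy0)
  have hgx2 : Real.exp (g (x + 1 / 2)) = Real.Gamma (x + 1 / 2) :=
    Real.exp_log (Real.Gamma_pos_of_pos (by linarith))
  have hgy2 : Real.exp (g (y + 1 / 2)) = Real.Gamma (y + 1 / 2) :=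
    Real.exp_log (Real.Gamma_pos_of_pos (by linarith))
  have : Real.exp (g (x + 1 / 2) - g x) ≤ Real.exp (g (y + 1 / 2) - g y) :=
    Real.exp_le_exp.mpr (by linarith)
  rwa [Real.exp_sub, Real.exp_sub, hgx, hgy, hgx2, hgy2] at this

/-- `λ ↦ Γ(λ + 1/2)/Γ(λ)` is strictly increasing on `(0, ∞)`. -/
theorem gamma_ratio_strictMono :
    StrictMonoOn (fun lam : ℝ => Real.Gamma (lam + 1 / 2) / Real.Gamma lam)
      (Set.Ioi (0 : ℝ)) := by
  intro a ha b hb hab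
  rcases lt_or_eq_of_le (gammaF_mono ha hb hab.le) with h | h
  · exact h
  exfalso
  have ha0 : (0:ℝ) < a := ha
  have hb0 : (0:ℝ) < b := hb
  set F : ℝ → ℝ := fun lam => Real.Gamma (lam + 1 / 2) / Real.Gamma lam with hF
  have hFa : 0 < F a := gammaF_pos ha0
  have hFb : 0 < F b := gammaF_pos hb0
  have hFa2 : 0 < F (a + 1 / 2) := gammaF_pos (by linarith)
  have hFb2 : 0 < F (b + 1 / 2) := gammaF_pos (by linarith)
  -- functional equations
  have ea1 : F a * F (a + 1 / 2) = a := gammaF_funEq ha0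
  have eb1 : F b * F (b + 1 / 2) = b := gammaF_funEq hb0
  have ea2 : F (a + 1 / 2) * F (a + 1 / 2 + 1 / 2) = a + 1 / 2 :=
    gammaF_funEq (by linarith)
  have eb2 : F (b + 1 / 2) * F (b + 1 / 2 + 1 / 2) = b + 1 / 2 :=
    gammaF_funEq (by linarith)
  -- monotonicity between a + 1 and b + 1
  have hmono : F (a + 1 / 2 + 1 / 2) ≤ F (b + 1 / 2 + 1 / 2) :=
    gammaF_mono (by simp; linarith) (by simp; linarith) (by linarith)
  have hh := mul_le_mul_of_nonneg_left hmono (mul_pos hFa2 hFb2).le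
  have h1 : F (b + 1 / 2) * (a + 1 / 2) ≤ F (a + 1 / 2) * (b + 1 / 2) := by
    calc F (b + 1 / 2) * (a + 1 / 2)
        = F (b + 1 / 2) * (F (a + 1 / 2) * F (a + 1 / 2 + 1 / 2)) := by rw [ea2]
      _ = F (a + 1 / 2) * F (b + 1 / 2) * F (a + 1 / 2 + 1 / 2) := by ring
      _ ≤ F (a + 1 / 2) * F (b + 1 / 2) * F (b + 1 / 2 + 1 / 2) := hh
      _ = F (a + 1 / 2) * (F (b + 1 / 2) * F (b + 1 / 2 + 1 / 2)) := by ring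
      _ = F (a + 1 / 2) * (b + 1 / 2) := by rw [eb2]
  have e3 : F a * F (b + 1 / 2) = b := by rw [h]; exact eb1
  have h2 : b * (a + 1 / 2) ≤ a * (b + 1 / 2) := by
    calc b * (a + 1 / 2) = F a * F (b + 1 / 2) * (a + 1 / 2) := by rw [e3]
      _ = F a * (F (b + 1 / 2) * (a + 1 / 2)) := by ring
      _ ≤ F a * (F (a + 1 / 2) * (b + 1 / 2)) :=
          mul_le_mul_of_nonneg_left h1 hFa.le
      _ = F a * F (a + 1 / 2) * (b + 1 / 2) := by ring
      _ = a * (b + 1 / 2) := by rw [ea1]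
  nlinarith [h2, hab]
end

section
/- Let K > 0 and let I : [0,∞) → ℝ satisfy I''(ξ) - (ξ/2) I'(ξ) = 0 for all ξ > 0, with I'(0) = -K·I(0) and I(0) ≠ 0. Then I(ξ) = I(0) - K I(0) ∫₀^ξ e^{t²/4} dt, and ∫₀^∞ I(ξ)² e^{-ξ²/4} dξ = ∞. -/
open Real MeasureTheory

/-- a solution of `I'' - (ξ/2)I' = 0` on `(0,∞)` with Robin data
`I'(0) = -K I(0)`, `I(0) ≠ 0`, equals `I(0) - K I(0) ∫₀^ξ e^{t²/4} dt` and is not in the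
Gaussian-weighted `L²` space. -/
theorem robin_zero_eigenvalue_excluded (K : ℝ) (hK : 0 < K) (I : ℝ → ℝ)
    (hI : ContDiff ℝ 2 I)
    (hode : ∀ ξ : ℝ, 0 < ξ → deriv (deriv I) ξ - ξ / 2 * deriv I ξ = 0)
    (hrobin : deriv I 0 = -K * I 0) (hI0 : I 0 ≠ 0) :
    (∀ ξ ∈ Set.Ici (0 : ℝ),
        I ξ = I 0 - K * I 0 * ∫ t in Set.Ioc (0 : ℝ) ξ, Real.exp (t ^ 2 / 4)) ∧
      (∫⁻ ξ in Set.Ioi (0 : ℝ),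
          ENNReal.ofReal ((I ξ) ^ 2 * Real.exp (-ξ ^ 2 / 4))) = ⊤ := by
  have hI1 : ContDiff ℝ 1 (deriv I) := by
    have := hI.iterate_deriv' 1 1
    simpa using this
  have hdcont : Continuous (deriv I) := hI1.continuous
  have hddcont : Continuous (deriv (deriv I)) := by
    have := hI.iterate_deriv' 0 2
    exact this.continuous
  -- the ODE extends to ξ = 0 by continuity
  have hode' : ∀ ξ : ℝ, 0 ≤ ξ → deriv (deriv I) ξ = ξ / 2 * deriv I ξ := by
    intro ξ hξ
    rcases lt_or_eq_of_le hξ with h | h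
    · have := hode ξ h; linarith
    · subst h
      have hF : Continuous (fun x : ℝ => deriv (deriv I) x - x / 2 * deriv I x) := by
        fun_prop
      have h1 : Filter.Tendsto (fun x : ℝ => deriv (deriv I) x - x / 2 * deriv I x)
          (nhdsWithin 0 (Set.Ioi 0)) (nhds (deriv (deriv I) 0 - 0 / 2 * deriv I 0)) :=
        (hF.tendsto 0).mono_left nhdsWithin_le_nhds
      have h2 : Filter.Tendsto (fun x : ℝ => deriv (deriv I) x - x / 2 * deriv I x)
          (nhdsWithin 0 (Set.Ioi 0)) (nhds 0) := by
        apply Filter.Tendsto.congr' _ tendsto_const_nhds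
        filter_upwards [self_mem_nhdsWithin] with x hx
        exact (hode x hx).symm
      have := tendsto_nhds_unique h1 h2
      linarith
  -- deriv I ξ = deriv I 0 * exp(ξ²/4) on [0,∞)
  have hderiv_eq : ∀ ξ : ℝ, 0 ≤ ξ → deriv I ξ = deriv I 0 * Real.exp (ξ ^ 2 / 4) := by
    intro ξ hξ
    set h : ℝ → ℝ := fun x => deriv I x * Real.exp (-(x ^ 2) / 4) with hh
    have hder : ∀ x : ℝ, 0 ≤ x → HasDerivAt h 0 x := by
      intro x hx
      have h1 : HasDerivAt (deriv I) (deriv (deriv I) x) x :=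
        ((hI1.differentiable one_ne_zero) x).hasDerivAt
      have h2 : HasDerivAt (fun y : ℝ => -(y ^ 2) / 4) (-(2 * x ^ 1) / 4) x :=
        ((hasDerivAt_pow 2 x).neg).div_const 4
      have h3 : HasDerivAt (fun y : ℝ => Real.exp (-(y ^ 2) / 4))
          (Real.exp (-(x ^ 2) / 4) * (-(2 * x ^ 1) / 4)) x := h2.exp
      have h4 := h1.mul h3
      have : deriv (deriv I) x * Real.exp (-(x ^ 2) / 4) +
          deriv I x * (Real.exp (-(x ^ 2) / 4) * (-(2 * x ^ 1) / 4)) = 0 := by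
        rw [hode' x hx]; ring
      rw [this] at h4
      exact h4
    have key : ∀ y ∈ Set.Icc (0 : ℝ) ξ, h y = h 0 := by
      apply eq_of_has_deriv_right_eq (f' := fun _ => (0 : ℝ)) (g := fun _ => h 0)
      · intro x hx
        exact ((hder x hx.1).hasDerivWithinAt)
      · intro x _
        exact (hasDerivAt_const x (h 0)).hasDerivWithinAt
      · exact ((hdcont.mul (by fun_prop)).continuousOn)
      · exact continuousOn_const
      · rfl
    have hξ' := key ξ ⟨hξ, le_rfl⟩
    have h0 : h 0 = deriv I 0 := by simp [hh]
    rw [h0] at hξ'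
    have hexp : Real.exp (-(ξ ^ 2) / 4) * Real.exp (ξ ^ 2 / 4) = 1 := by
      rw [← Real.exp_add, show -(ξ ^ 2) / 4 + ξ ^ 2 / 4 = 0 by ring, Real.exp_zero]
    have hξ'' : deriv I ξ * Real.exp (-(ξ ^ 2) / 4) = deriv I 0 := hξ'
    linear_combination Real.exp (ξ ^ 2 / 4) * hξ'' - deriv I ξ * hexp
  -- the explicit formula
  have hint : ∀ ξ : ℝ, IntegrableOn (fun t => Real.exp (t ^ 2 / 4)) (Set.Ioc 0 ξ) := by
    intro ξ
    exact (Real.continuous_exp.comp (by fun_prop)).integrableOn_Ioc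
  have hformula : ∀ ξ : ℝ, 0 ≤ ξ →
      I ξ = I 0 - K * I 0 * ∫ t in Set.Ioc (0 : ℝ) ξ, Real.exp (t ^ 2 / 4) := by
    intro ξ hξ
    have hdiff : ∀ x ∈ Set.uIcc (0 : ℝ) ξ, DifferentiableAt ℝ I x := fun x _ =>
      (hI.differentiable (by norm_num)) x
    have hii : IntervalIntegrable (deriv I) volume 0 ξ :=
      hdcont.intervalIntegrable 0 ξ
    have h1 : ∫ y in (0 : ℝ)..ξ, deriv I y = I ξ - I 0 :=
      intervalIntegral.integral_deriv_eq_sub hdiff hii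
    have h2 : ∫ y in (0 : ℝ)..ξ, deriv I y
        = ∫ y in (0 : ℝ)..ξ, deriv I 0 * Real.exp (y ^ 2 / 4) := by
      apply intervalIntegral.integral_congr
      intro y hy
      rw [Set.uIcc_of_le hξ] at hy
      exact hderiv_eq y hy.1
    have h3 : ∫ y in (0 : ℝ)..ξ, deriv I 0 * Real.exp (y ^ 2 / 4)
        = deriv I 0 * ∫ y in (0 : ℝ)..ξ, Real.exp (y ^ 2 / 4) :=
      intervalIntegral.integral_const_mul _ _
    have h4 : ∫ y in (0 : ℝ)..ξ, Real.exp (y ^ 2 / 4)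
        = ∫ t in Set.Ioc (0 : ℝ) ξ, Real.exp (t ^ 2 / 4) :=
      intervalIntegral.integral_of_le hξ
    rw [h2, h3, h4, hrobin] at h1
    linarith
  refine ⟨fun ξ hξ => hformula ξ hξ, ?_⟩
  -- divergence of the weighted integral
  set F : ℝ → ℝ := fun ξ => ∫ t in Set.Ioc (0 : ℝ) ξ, Real.exp (t ^ 2 / 4) with hF
  have hFbound : ∀ ξ : ℝ, 1 ≤ ξ → Real.exp ((ξ - 1) ^ 2 / 4) ≤ F ξ := by
    intro ξ hξ
    have hsub : Set.Ioc (ξ - 1) ξ ⊆ Set.Ioc 0 ξ := Set.Ioc_subset_Ioc (by linarith) le_rfl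
    have e1 : Real.exp ((ξ - 1) ^ 2 / 4)
        = ∫ t in Set.Ioc (ξ - 1) ξ, Real.exp ((ξ - 1) ^ 2 / 4) := by
      rw [setIntegral_const]
      rw [measureReal_def, Real.volume_Ioc]
      rw [ENNReal.toReal_ofReal (by linarith)]
      simp
    have e2 : (∫ t in Set.Ioc (ξ - 1) ξ, Real.exp ((ξ - 1) ^ 2 / 4))
        ≤ ∫ t in Set.Ioc (ξ - 1) ξ, Real.exp (t ^ 2 / 4) := by
      apply setIntegral_mono_on (integrableOn_const measure_Ioc_lt_top.ne)
        ((hint ξ).mono_set hsub) measurableSet_Ioc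
      intro t ht
      have h2 : (ξ - 1) ^ 2 ≤ t ^ 2 := pow_le_pow_left₀ (by linarith) ht.1.le 2
      exact Real.exp_le_exp.2 (by linarith)
    have e3 : (∫ t in Set.Ioc (ξ - 1) ξ, Real.exp (t ^ 2 / 4)) ≤ F ξ := by
      apply setIntegral_mono_set (hint ξ)
      · filter_upwards with t using (Real.exp_pos _).le
      · exact Filter.Eventually.of_forall hsub
    linarith
  set D : ℝ := (I 0) ^ 2 * K ^ 2 / 4 with hD
  have hDpos : 0 < D := by positivity
  have hq : Filter.Tendsto (fun ξ : ℝ => (ξ ^ 2 - 4 * ξ + 2) / 4) Filter.atTop Filter.atTop := by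
    have h1 : Filter.Tendsto (fun ξ : ℝ => (ξ + (-2)) ^ 2) Filter.atTop Filter.atTop :=
      (Filter.tendsto_pow_atTop two_ne_zero).comp
        (Filter.tendsto_atTop_add_const_right _ _ Filter.tendsto_id)
    have h2 := Filter.tendsto_atTop_add_const_right Filter.atTop (-2 : ℝ) h1
    have h3 := h2.atTop_div_const (by norm_num : (0:ℝ) < 4)
    apply h3.congr
    intro ξ; ring
  have hq1 : Filter.Tendsto (fun ξ : ℝ => (ξ - 1) ^ 2 / 4) Filter.atTop Filter.atTop := by
    have h1 : Filter.Tendsto (fun ξ : ℝ => (ξ + (-1)) ^ 2) Filter.atTop Filter.atTop :=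
      (Filter.tendsto_pow_atTop two_ne_zero).comp
        (Filter.tendsto_atTop_add_const_right _ _ Filter.tendsto_id)
    have h3 := h1.atTop_div_const (by norm_num : (0:ℝ) < 4)
    apply h3.congr
    intro ξ; ring_nf
  have hE : Filter.Tendsto (fun ξ : ℝ => D * Real.exp ((ξ ^ 2 - 4 * ξ + 2) / 4))
      Filter.atTop Filter.atTop :=
    (Real.tendsto_exp_atTop.comp hq).const_mul_atTop hDpos
  have hE1 : Filter.Tendsto (fun ξ : ℝ => K * Real.exp ((ξ - 1) ^ 2 / 4))
      Filter.atTop Filter.atTop :=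
    (Real.tendsto_exp_atTop.comp hq1).const_mul_atTop hK
  have hev : ∀ᶠ ξ in Filter.atTop, (2 : ℝ) ≤ K * Real.exp ((ξ - 1) ^ 2 / 4)
      ∧ (1 : ℝ) ≤ D * Real.exp ((ξ ^ 2 - 4 * ξ + 2) / 4) ∧ (1 : ℝ) ≤ ξ :=
    (hE1.eventually_ge_atTop 2).and ((hE.eventually_ge_atTop 1).and (Filter.eventually_ge_atTop 1))
  obtain ⟨a, ha⟩ := Filter.eventually_atTop.1 hev
  have ha1 : 1 ≤ a := (ha a le_rfl).2.2
  have hmain : ∀ ξ : ℝ, a ≤ ξ → 1 ≤ (I ξ) ^ 2 * Real.exp (-ξ ^ 2 / 4) := by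
    intro ξ hξ
    obtain ⟨hc1, hc2, hc3⟩ := ha ξ hξ
    have hFb := hFbound ξ hc3
    have hKF : 2 ≤ K * F ξ := le_trans hc1 (by nlinarith [Real.exp_pos ((ξ-1)^2/4)])
    have hIξ : I ξ = I 0 * (1 - K * F ξ) := by
      have h5 := hformula ξ (by linarith)
      have hFξ : F ξ = ∫ t in Set.Ioc (0 : ℝ) ξ, Real.exp (t ^ 2 / 4) := rfl
      rw [← hFξ] at h5
      rw [h5]; ring
    have hsq : (1 - K * F ξ) ^ 2 ≥ (K * F ξ / 2) ^ 2 := by nlinarith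
    have hI2 : (I ξ) ^ 2 ≥ D * (F ξ) ^ 2 := by
      rw [hIξ, mul_pow, hD]
      nlinarith [sq_nonneg (I 0), sq_nonneg (1 - K * F ξ)]
    have hF2 : (F ξ) ^ 2 ≥ Real.exp ((ξ - 1) ^ 2 / 2) := by
      have h1 : Real.exp ((ξ-1)^2/4) ^ 2 = Real.exp ((ξ-1)^2/2) := by
        rw [sq, ← Real.exp_add]; congr 1; ring
      nlinarith [Real.exp_pos ((ξ-1)^2/4)]
    have hexpeq : Real.exp ((ξ - 1) ^ 2 / 2) * Real.exp (-ξ ^ 2 / 4)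
        = Real.exp ((ξ ^ 2 - 4 * ξ + 2) / 4) := by
      rw [← Real.exp_add]; congr 1; ring
    have hep := Real.exp_pos (-ξ ^ 2 / 4)
    calc (1 : ℝ) ≤ D * Real.exp ((ξ ^ 2 - 4 * ξ + 2) / 4) := hc2
      _ = D * (Real.exp ((ξ - 1) ^ 2 / 2) * Real.exp (-ξ ^ 2 / 4)) := by rw [hexpeq]
      _ ≤ D * ((F ξ) ^ 2 * Real.exp (-ξ ^ 2 / 4)) := by
          gcongr
      _ = (D * (F ξ) ^ 2) * Real.exp (-ξ ^ 2 / 4) := by ring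
      _ ≤ (I ξ) ^ 2 * Real.exp (-ξ ^ 2 / 4) := by
          gcongr
  -- conclude the lintegral is infinite
  have htop : (⊤ : ENNReal) ≤ ∫⁻ ξ in Set.Ioi (0 : ℝ),
      ENNReal.ofReal ((I ξ) ^ 2 * Real.exp (-ξ ^ 2 / 4)) := by
    calc (⊤ : ENNReal) = volume (Set.Ioi a) := (Real.volume_Ioi).symm
      _ = ∫⁻ _ in Set.Ioi a, (1 : ENNReal) := (setLIntegral_one _).symm
      _ ≤ ∫⁻ ξ in Set.Ioi a, ENNReal.ofReal ((I ξ) ^ 2 * Real.exp (-ξ ^ 2 / 4)) := by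
          apply setLIntegral_mono
          · apply Measurable.ennreal_ofReal
            exact ((hI.continuous.pow 2).mul
              (Real.continuous_exp.comp (by fun_prop))).measurable
          · intro x hx
            rw [← ENNReal.ofReal_one]
            exact ENNReal.ofReal_le_ofReal (hmain x (le_of_lt hx))
      _ ≤ ∫⁻ ξ in Set.Ioi (0 : ℝ), ENNReal.ofReal ((I ξ) ^ 2 * Real.exp (-ξ ^ 2 / 4)) :=
          lintegral_mono_set (Set.Ioi_subset_Ioi (by linarith))
  exact top_le_iff.1 htop
end

section
/- Let C > 0, s₀ ∈ ℝ, and let a : [s₀, ∞) → ℝ be a C¹ function with a(s) < 0 for all s, lim_{s→∞} a(s) = 0, and suppose there is a continuous function ν : [s₀, ∞) → [0, ∞) with lim_{s→∞} ν(s) = 0 such that |a'(s) - C a(s)²| ≤ ν(s) a(s)² for all s ≥ s₀. Then lim_{s→∞} s·a(s) = -1/C. -/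
open Real Filter

/-- Auxiliary: if `f` has derivative `g` on `[s₀, ∞)` and `g` is eventually within any
`ε` of `C`, then `f s / s → C`. -/
lemma aux_div_tendsto (s₀ C : ℝ) (f g : ℝ → ℝ)
    (hf : ∀ s ∈ Set.Ici s₀, HasDerivAt f (g s) s)
    (hg : ∀ ε > (0:ℝ), ∀ᶠ s in atTop, |g s - C| ≤ ε) :
    Tendsto (fun s => f s / s) atTop (nhds C) := by
  rw [Metric.tendsto_atTop]
  intro ε hε
  obtain ⟨s₁, hs₁⟩ := (eventually_atTop.1 (hg (ε/2) (by linarith)))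
  set s₂ : ℝ := max s₁ (max s₀ 1) with hs₂def
  have hs₂0 : (0:ℝ) < s₂ := lt_of_lt_of_le one_pos (le_max_of_le_right (le_max_right _ _))
  set K : ℝ := |f s₂ - C * s₂| with hK
  refine ⟨max s₂ (2 * K / ε + 1), fun s hs => ?_⟩
  have hss₂ : s₂ ≤ s := le_trans (le_max_left _ _) hs
  have hsK : 2 * K / ε + 1 ≤ s := le_trans (le_max_right _ _) hs
  have hs0 : (0:ℝ) < s := lt_of_lt_of_le hs₂0 hss₂
  have hK0 : 0 ≤ K := abs_nonneg _
  -- mean value estimate on [s₂, s] for φ = f - C·id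
  have hmv : |(f s - C * s) - (f s₂ - C * s₂)| ≤ (ε/2) * (s - s₂) := by
    have := norm_image_sub_le_of_norm_deriv_le_segment'
      (f := fun t => f t - C * t) (f' := fun t => g t - C) (a := s₂) (b := s) (C := ε/2)
      (fun x hx => by
        have hx₀ : x ∈ Set.Ici s₀ := le_trans (le_max_of_le_right (le_max_left _ _)) hx.1
        exact (((hf x hx₀).sub ((hasDerivAt_id x).const_mul C)).hasDerivWithinAt).congr_deriv
          (by ring))
      (fun x hx => by
        have : s₁ ≤ x := le_trans (le_max_left _ _) hx.1
        simpa using hs₁ x this)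
      s (Set.right_mem_Icc.2 hss₂)
    simpa [Real.norm_eq_abs] using this
  have hφ : |f s - C * s| ≤ K + (ε/2) * s := by
    have h1 : |f s - C * s| - |f s₂ - C * s₂| ≤ |(f s - C * s) - (f s₂ - C * s₂)| :=
      abs_sub_abs_le_abs_sub _ _
    have h2 : (ε/2) * (s - s₂) ≤ (ε/2) * s := by nlinarith
    rw [hK]; linarith
  have hKs : K / s < ε / 2 := by
    rw [div_lt_iff₀ hs0]
    have hmul : ε * (2 * K / ε + 1) ≤ ε * s := mul_le_mul_of_nonneg_left hsK hε.le
    have he : ε * (2 * K / ε) = 2 * K := by field_simp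
    nlinarith
  have hdist : dist (f s / s) C = |f s - C * s| / s := by
    rw [Real.dist_eq]
    have hrw : f s / s - C = (f s - C * s) / s := by field_simp
    rw [hrw, abs_div, abs_of_pos hs0]
  rw [hdist]
  calc |f s - C * s| / s ≤ (K + (ε/2) * s) / s := by gcongr
    _ = K / s + ε/2 := by rw [add_div, mul_div_assoc, div_self hs0.ne', mul_one]
    _ < ε := by linarith

/-- ODE lemma for the neutral mode: if `a < 0`, `a → 0`, and
`|a' - Ca²| ≤ ν a²` with `ν → 0`, then `s·a(s) → -1/C`. -/
theorem neutral_mode_ode (C s₀ : ℝ) (hC : 0 < C) (a ν : ℝ → ℝ)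
    (ha_diff : ∀ s ∈ Set.Ici s₀, DifferentiableAt ℝ a s)
    (ha_cont : ContinuousOn (deriv a) (Set.Ici s₀))
    (ha_neg : ∀ s ∈ Set.Ici s₀, a s < 0)
    (ha_lim : Tendsto a atTop (nhds 0))
    (hν_cont : ContinuousOn ν (Set.Ici s₀))
    (hν_nonneg : ∀ s ∈ Set.Ici s₀, 0 ≤ ν s)
    (hν_lim : Tendsto ν atTop (nhds 0))
    (hineq : ∀ s ∈ Set.Ici s₀, |deriv a s - C * (a s) ^ 2| ≤ ν s * (a s) ^ 2) :
    Tendsto (fun s => s * a s) atTop (nhds (-1 / C)) := by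
  set b : ℝ → ℝ := fun s => -(a s)⁻¹ with hb
  have hane : ∀ s ∈ Set.Ici s₀, a s ≠ 0 := fun s hs => ne_of_lt (ha_neg s hs)
  have hbderiv : ∀ s ∈ Set.Ici s₀, HasDerivAt b (deriv a s / (a s) ^ 2) s := by
    intro s hs
    have h1 := ((ha_diff s hs).hasDerivAt.inv (hane s hs)).neg
    exact h1.congr_deriv (by ring)
  have hgν : ∀ s ∈ Set.Ici s₀, |deriv a s / (a s) ^ 2 - C| ≤ ν s := by
    intro s hs
    have hne := hane s hs
    have ha2 : (0:ℝ) < (a s) ^ 2 := by positivity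
    have := hineq s hs
    rw [show deriv a s / (a s)^2 - C = (deriv a s - C * (a s)^2) / (a s)^2 by
      field_simp, abs_div, abs_of_pos ha2, div_le_iff₀ ha2]
    linarith
  have hbs : Tendsto (fun s => b s / s) atTop (nhds C) := by
    apply aux_div_tendsto s₀ C b (fun s => deriv a s / (a s) ^ 2) hbderiv
    intro ε hε
    have h1 : ∀ᶠ s in atTop, ν s < ε := hν_lim.eventually (gt_mem_nhds hε)
    have h2 : ∀ᶠ s in atTop, s ∈ Set.Ici s₀ := eventually_ge_atTop s₀
    filter_upwards [h1, h2] with s hνs hs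
    exact (hgν s hs).trans hνs.le
  have hbpos : ∀ s ∈ Set.Ici s₀, 0 < b s := by
    intro s hs
    have := ha_neg s hs
    simp only [hb]
    exact neg_pos.mpr (inv_lt_zero.mpr this)
  have hfinal : Tendsto (fun s => -(b s / s)⁻¹) atTop (nhds (-C⁻¹)) :=
    (hbs.inv₀ (ne_of_gt hC)).neg
  have heq : ∀ᶠ s in atTop, -(b s / s)⁻¹ = s * a s := by
    filter_upwards [eventually_ge_atTop s₀, eventually_gt_atTop 0] with s hs hs0
    have hane' := hane s hs
    simp only [hb]
    field_simp
  have hres : Tendsto (fun s => s * a s) atTop (nhds (-C⁻¹)) := hfinal.congr' heq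
  simpa [neg_div, one_div] using hres
end
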